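/- Let G be a finite simple graph. There exist vectors ψ_{y,z} ∈ ℂ³, indexed by the vertices y of G' and z ∈ {1,2,3}, such that the matrix with entries |⟨ψ_{y,z}, ψ_{y',z'}⟩|² fits Δ(G'), if and only if there exist 3-dimensional quantum states ρ_{y,z} (one for each vertex y of G' and each z ∈ {1,2,3}) and, for each vertex y' of G', a 3-dimensional POVM (E_{y',1}, E_{y',2}, E_{y',3}) such that the matrix with entries tr(ρ_{y,z} E_{y',z'}) fits Δ(G'). -/

import Mathlib

open Matrix
open scoped ComplexOrder

/-- Vertices of the graph `G'`: the original vertices of `G` together with, for every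
pair `{i,j}` of distinct vertices (represented as `i < j`), four new gadget vertices
`a_{ij}, b_{ij}, c_{ij}, d_{ij}` encoded as `Fin 4` (`0 = a`, `1 = b`, `2 = c`, `3 = d`). -/
abbrev GVert (n : ℕ) := Fin n ⊕ ({p : Fin n × Fin n // p.1 < p.2} × Fin 4)

/-- The edges of `G'`: the original edges of `G`, and for every pair `i < j` the nine
gadget edges `{i,a},{i,b},{i,d},{a,b},{a,j},{b,c},{c,d},{c,j},{d,j}`. -/
def gadgetRel {n : ℕ} (G : SimpleGraph (Fin n)) : GVert n → GVert n → Prop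
  | Sum.inl i, Sum.inl j => G.Adj i j
  | Sum.inl v, Sum.inr (⟨(i, j), _⟩, k) =>
      (v = i ∧ (k = 0 ∨ k = 1 ∨ k = 3)) ∨ (v = j ∧ (k = 0 ∨ k = 2 ∨ k = 3))
  | Sum.inr (p, k), Sum.inr (q, l) =>
      p = q ∧ ((k = 0 ∧ l = 1) ∨ (k = 1 ∧ l = 2) ∨ (k = 2 ∧ l = 3))
  | _, _ => False

/-- The graph `G'` obtained from `G` by inserting the gadget `H_{ij}` for every pair of
distinct vertices `i, j` of `G`. -/
def gadgetGraph {n : ℕ} (G : SimpleGraph (Fin n)) : SimpleGraph (GVert n) :=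
  SimpleGraph.fromRel (gadgetRel G)

/-- The triangle decoration `Δ(H)` of a graph `H`: each vertex `w` becomes the triangle
`(w,1),(w,2),(w,3)` (here `(w,0),(w,1),(w,2)`), with `(w,0)` identified with `w`. -/
def triDec {W : Type*} (H : SimpleGraph W) : SimpleGraph (W × Fin 3) :=
  SimpleGraph.fromRel fun a b =>
    (a.2 = 0 ∧ b.2 = 0 ∧ H.Adj a.1 b.1) ∨ (a.1 = b.1 ∧ a.2 ≠ b.2)

/-- A matrix `A` fits a graph `H` if all its diagonal entries are `1` and `A v w = 0`
whenever `{v,w}` is an edge of `H`. -/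
def Fits {V R : Type*} [Zero R] [One R] (H : SimpleGraph V) (A : Matrix V V R) : Prop :=
  (∀ v, A v v = 1) ∧ ∀ v w, H.Adj v w → A v w = 0

/-- A `d`-dimensional quantum state: a positive semidefinite complex `d × d` matrix of trace 1. -/
def IsState {d : ℕ} (ρ : Matrix (Fin d) (Fin d) ℂ) : Prop :=
  ρ.PosSemidef ∧ ρ.trace = 1

/-- A `d`-dimensional POVM with `Z` outcomes: positive semidefinite complex `d × d` matrices
summing to the identity. -/
def IsPOVM {d Z : ℕ} (E : Fin Z → Matrix (Fin d) (Fin d) ℂ) : Prop :=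
  (∀ z, (E z).PosSemidef) ∧ ∑ z, E z = 1

open scoped MatrixOrder in
lemma psd_sqrt_exists {d : ℕ} {M : Matrix (Fin d) (Fin d) ℂ} (hM : M.PosSemidef) :
    ∃ R : Matrix (Fin d) (Fin d) ℂ, Rᴴ = R ∧ R * R = M := by
  obtain ⟨X, hX, -, h⟩ := CFC.exists_sqrt_of_isSelfAdjoint_of_quasispectrumRestricts
    hM.isHermitian (QuasispectrumRestricts.nnreal_of_nonneg hM.nonneg)
  exact ⟨X, hX, h⟩

lemma psd_trace_zero {d : ℕ} {M : Matrix (Fin d) (Fin d) ℂ} (hM : M.PosSemidef)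
    (h : M.trace = 0) : M = 0 := by
  obtain ⟨B, hB, hBB⟩ := psd_sqrt_exists hM
  have hMB : M = Bᴴ * B := by rw [hB, hBB]
  subst hMB
  rw [Matrix.conjTranspose_mul_self_eq_zero]
  have htr : ∑ j, ∑ i, star (B i j) * B i j = 0 := by
    simpa [Matrix.trace, Matrix.diag, Matrix.mul_apply, Matrix.conjTranspose_apply] using h
  ext i j
  have h1 : ∀ j' ∈ Finset.univ, (0:ℂ) ≤ ∑ i, star (B i j') * B i j' :=
    fun j' _ => Finset.sum_nonneg fun i _ => star_mul_self_nonneg _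
  have h2 := (Finset.sum_eq_zero_iff_of_nonneg h1).mp htr j (Finset.mem_univ j)
  have h3 : ∀ i' ∈ Finset.univ, (0:ℂ) ≤ star (B i' j) * B i' j :=
    fun i' _ => star_mul_self_nonneg _
  have h4 := (Finset.sum_eq_zero_iff_of_nonneg h3).mp h2 i (Finset.mem_univ i)
  rw [Complex.star_def, ← Complex.normSq_eq_conj_mul_self] at h4
  exact_mod_cast Complex.normSq_eq_zero.mp (by exact_mod_cast h4)

lemma psd_mul_eq_zero {d : ℕ} {M N : Matrix (Fin d) (Fin d) ℂ} (hM : M.PosSemidef)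
    (hN : N.PosSemidef) (h : (M * N).trace = 0) : N * M = 0 := by
  obtain ⟨R, hRh, hRR⟩ := psd_sqrt_exists hM
  obtain ⟨F, hFh, hFF⟩ := psd_sqrt_exists hN
  have key : (F * R)ᴴ * (F * R) = 0 := by
    apply psd_trace_zero (posSemidef_conjTranspose_mul_self _)
    have : (F * R)ᴴ * (F * R) = R * ((F * F) * R) := by
      rw [conjTranspose_mul, hRh, hFh]; noncomm_ring
    rw [this, hFF]
    calc (R * (N * R)).trace = ((R * N) * R).trace := by rw [mul_assoc]
      _ = (R * (R * N)).trace := Matrix.trace_mul_comm _ _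
      _ = ((R * R) * N).trace := by rw [mul_assoc]
      _ = 0 := by rw [hRR, h]
  have hFR : F * R = 0 := Matrix.conjTranspose_mul_self_eq_zero.mp key
  calc N * M = F * (F * R) * R := by rw [← hRR, ← hFF]; noncomm_ring
    _ = 0 := by rw [hFR]; simp

noncomputable def outer {d : ℕ} (u : Fin d → ℂ) : Matrix (Fin d) (Fin d) ℂ :=
  Matrix.of fun i j => u i * (starRingEnd ℂ) (u j)

lemma outer_posSemidef {d : ℕ} (u : Fin d → ℂ) : (outer u).PosSemidef := by
  refine Matrix.PosSemidef.of_dotProduct_mulVec_nonneg ?_ ?_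
  · ext i j
    simp [outer, Matrix.conjTranspose_apply, mul_comm]
  · intro x
    have : star x ⬝ᵥ (outer u) *ᵥ x
        = star (∑ j, (starRingEnd ℂ) (u j) * x j) * (∑ j, (starRingEnd ℂ) (u j) * x j) := by
      simp only [dotProduct, Matrix.mulVec, outer, Matrix.of_apply, Pi.star_apply]
      rw [star_sum, Finset.sum_mul_sum]
      apply Finset.sum_congr rfl; intro i _
      rw [Finset.mul_sum]
      apply Finset.sum_congr rfl; intro j _
      simp only [Complex.star_def, _root_.map_mul, Complex.conj_conj]
      ring
    rw [this]
    exact star_mul_self_nonneg _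
lemma outer_trace {d : ℕ} (u : Fin d → ℂ) :
    (outer u).trace = ∑ j, (starRingEnd ℂ) (u j) * u j := by
  simp [Matrix.trace, Matrix.diag, outer, mul_comm]
lemma trace_outer_mul {d : ℕ} (u v : Fin d → ℂ) :
    (outer u * outer v).trace
      = (∑ j, (starRingEnd ℂ) (u j) * v j) * (starRingEnd ℂ) (∑ j, (starRingEnd ℂ) (u j) * v j) := by
  simp only [Matrix.trace, Matrix.diag, Matrix.mul_apply, outer, Matrix.of_apply]
  rw [map_sum, Finset.sum_mul_sum, Finset.sum_comm]
  apply Finset.sum_congr rfl; intro i _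
  apply Finset.sum_congr rfl; intro j _
  simp only [_root_.map_mul, Complex.conj_conj]
  ring
lemma outer_sum_eq_one {d : ℕ} (u : Fin d → Fin d → ℂ)
    (h : ∀ z w, (∑ j, (starRingEnd ℂ) (u z j) * u w j) = if z = w then 1 else 0) :
    ∑ z, outer (u z) = 1 := by
  set B : Matrix (Fin d) (Fin d) ℂ := Matrix.of fun z j => (starRingEnd ℂ) (u z j) with hB
  have h1 : B * Bᴴ = 1 := by
    ext z w
    simp only [Matrix.mul_apply, hB, Matrix.conjTranspose_apply, Matrix.of_apply,
      Complex.star_def, Complex.conj_conj]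
    rw [show (∑ j, (starRingEnd ℂ) (u z j) * u w j) = _ from h z w]
    simp [Matrix.one_apply]
  have h2 : Bᴴ * B = 1 := mul_eq_one_comm.mp h1
  rw [← h2]
  ext i j
  simp only [Matrix.sum_apply, Matrix.mul_apply, hB, Matrix.conjTranspose_apply,
    Matrix.of_apply, outer, Complex.star_def, Complex.conj_conj]

set_option maxHeartbeats 1000000 in
theorem stmt3 {n : ℕ} (G : SimpleGraph (Fin n)) :
    (∃ ψ : GVert n → Fin 3 → (Fin 3 → ℂ),
        Fits (triDec (gadgetGraph G))
          (Matrix.of fun a b : GVert n × Fin 3 =>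
            (‖∑ j, (starRingEnd ℂ) (ψ a.1 a.2 j) * ψ b.1 b.2 j‖) ^ 2)) ↔
      ∃ (ρ : GVert n → Fin 3 → Matrix (Fin 3) (Fin 3) ℂ)
        (E : GVert n → Fin 3 → Matrix (Fin 3) (Fin 3) ℂ),
        (∀ y z, IsState (ρ y z)) ∧ (∀ y', IsPOVM (E y')) ∧
        Fits (triDec (gadgetGraph G))
          (Matrix.of fun a b : GVert n × Fin 3 => (ρ a.1 a.2 * E b.1 b.2).trace) := by
  constructor
  · rintro ⟨ψ, hdiag, hedge⟩
    simp only [Matrix.of_apply] at hdiag hedge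
    have hone : ∀ y z, (∑ j, (starRingEnd ℂ) (ψ y z j) * ψ y z j) = 1 := by
      intro y z
      have h1 := hdiag (y, z)
      have h2 : (∑ j, (starRingEnd ℂ) (ψ y z j) * ψ y z j)
          = ((∑ j, Complex.normSq (ψ y z j) : ℝ) : ℂ) := by
        push_cast
        exact Finset.sum_congr rfl fun j _ => (Complex.normSq_eq_conj_mul_self).symm
      rw [h2] at h1 ⊢
      rw [Complex.norm_real, Real.norm_eq_abs] at h1
      have hc : (0:ℝ) ≤ ∑ j, Complex.normSq (ψ y z j) :=
        Finset.sum_nonneg fun j _ => Complex.normSq_nonneg _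
      rw [abs_of_nonneg hc] at h1
      norm_cast
      nlinarith
    have horth : ∀ y (z z' : Fin 3), z ≠ z' →
        (∑ j, (starRingEnd ℂ) (ψ y z j) * ψ y z' j) = 0 := by
      intro y z z' hzz'
      have hadj : (triDec (gadgetGraph G)).Adj (y, z) (y, z') := by
        rw [triDec, SimpleGraph.fromRel_adj]
        exact ⟨by simp [Prod.ext_iff, hzz'], Or.inl (Or.inr ⟨rfl, hzz'⟩)⟩
      have h1 := hedge (y, z) (y, z') hadj
      have habs : ‖∑ j, (starRingEnd ℂ) (ψ y z j) * ψ y z' j‖ = 0 := by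
        nlinarith [norm_nonneg (∑ j, (starRingEnd ℂ) (ψ y z j) * ψ y z' j)]
      exact norm_eq_zero.mp habs
    refine ⟨fun y z => outer (ψ y z), fun y z => outer (ψ y z), ?_, ?_, ?_, ?_⟩
    · exact fun y z => ⟨outer_posSemidef _, by rw [outer_trace, hone]⟩
    · intro y
      refine ⟨fun z => outer_posSemidef _, ?_⟩
      apply outer_sum_eq_one
      intro z w
      by_cases hzw : z = w
      · subst hzw; simp [hone]
      · simp only [hzw, if_false]; exact horth y z w hzw
    · intro v
      simp only [Matrix.of_apply]
      rw [trace_outer_mul, hone]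
      simp
    · intro v w hadj
      simp only [Matrix.of_apply]
      rw [trace_outer_mul]
      have h1 := hedge v w hadj
      have habs : ‖∑ j, (starRingEnd ℂ) (ψ v.1 v.2 j) * ψ w.1 w.2 j‖ = 0 := by
        nlinarith [norm_nonneg (∑ j, (starRingEnd ℂ) (ψ v.1 v.2 j) * ψ w.1 w.2 j)]
      rw [norm_eq_zero.mp habs]
      simp
  · rintro ⟨ρ, E, hstate, hpovm, hdiag, hedge⟩
    simp only [Matrix.of_apply] at hdiag hedge
    have hfix : ∀ y z, E y z * ρ y z = ρ y z := by
      intro y z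
      have hpsd : (1 - E y z).PosSemidef := by
        have heq : (1 : Matrix (Fin 3) (Fin 3) ℂ) - E y z
            = ∑ w ∈ Finset.univ.erase z, E y w := by
          rw [← (hpovm y).2, ← Finset.add_sum_erase _ _ (Finset.mem_univ z),
            add_sub_cancel_left]
        rw [heq]
        apply Finset.sum_induction _ _ (fun a b ha hb => ha.add hb) Matrix.PosSemidef.zero
        exact fun w _ => (hpovm y).1 w
      have htr0 : (ρ y z * (1 - E y z)).trace = 0 := by
        rw [mul_sub, mul_one, Matrix.trace_sub, (hstate y z).2, hdiag (y, z)]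
        ring
      have h0 := psd_mul_eq_zero (hstate y z).1 hpsd htr0
      rw [sub_mul, one_mul, sub_eq_zero] at h0
      exact h0.symm
    have hzero : ∀ a b : GVert n × Fin 3, (triDec (gadgetGraph G)).Adj a b →
        ρ a.1 a.2 * ρ b.1 b.2 = 0 := by
      intro a b hadj
      have h2 : E b.1 b.2 * ρ a.1 a.2 = 0 :=
        psd_mul_eq_zero (hstate _ _).1 ((hpovm _).1 _) (hedge a b hadj)
      have h3 : ρ a.1 a.2 * E b.1 b.2 = 0 := by
        have h4 := congrArg Matrix.conjTranspose h2
        rwa [Matrix.conjTranspose_mul, (hstate a.1 a.2).1.1, ((hpovm b.1).1 b.2).1,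
          Matrix.conjTranspose_zero] at h4
      calc ρ a.1 a.2 * ρ b.1 b.2 = ρ a.1 a.2 * (E b.1 b.2 * ρ b.1 b.2) := by
            rw [hfix]
        _ = (ρ a.1 a.2 * E b.1 b.2) * ρ b.1 b.2 := by rw [mul_assoc]
        _ = 0 := by rw [h3, zero_mul]
    have hex : ∀ y z, ∃ u : Fin 3 → ℂ, ρ y z *ᵥ u ≠ 0 := by
      intro y z
      by_contra h
      push_neg at h
      have hρ0 : ρ y z = 0 := by
        ext i j
        have := congrFun (h (Pi.single j 1)) i
        simpa [Matrix.mulVec_single] using this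
      have := (hstate y z).2
      rw [hρ0] at this
      simp at this
    choose u hu using hex
    have hc : ∀ y z, 0 < ∑ j, Complex.normSq ((ρ y z *ᵥ u y z) j) := by
      intro y z
      obtain ⟨j, hj⟩ := Function.ne_iff.mp (hu y z)
      exact Finset.sum_pos' (fun j _ => Complex.normSq_nonneg _)
        ⟨j, Finset.mem_univ j, Complex.normSq_pos.mpr hj⟩
    refine ⟨fun y z j => ((Real.sqrt (∑ j, Complex.normSq ((ρ y z *ᵥ u y z) j)) : ℂ))⁻¹
        * (ρ y z *ᵥ u y z) j, ?_, ?_⟩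
    · intro a
      obtain ⟨y, z⟩ := a
      simp only [Matrix.of_apply]
      set c : ℝ := ∑ j, Complex.normSq ((ρ y z *ᵥ u y z) j) with hcdef
      have hsum : (∑ j, (starRingEnd ℂ) (((Real.sqrt c : ℂ))⁻¹ * (ρ y z *ᵥ u y z) j)
          * (((Real.sqrt c : ℂ))⁻¹ * (ρ y z *ᵥ u y z) j)) = 1 := by
        have : ∀ j, (starRingEnd ℂ) (((Real.sqrt c : ℂ))⁻¹ * (ρ y z *ᵥ u y z) j)
            * (((Real.sqrt c : ℂ))⁻¹ * (ρ y z *ᵥ u y z) j)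
            = ((Real.sqrt c : ℂ))⁻¹ * ((Real.sqrt c : ℂ))⁻¹
              * ((Complex.normSq ((ρ y z *ᵥ u y z) j) : ℝ) : ℂ) := by
          intro j
          rw [_root_.map_mul, map_inv₀, Complex.conj_ofReal, Complex.normSq_eq_conj_mul_self]
          ring
        rw [Finset.sum_congr rfl fun j _ => this j, ← Finset.mul_sum]
        have hcc : ((c : ℝ) : ℂ) = (∑ j, ((Complex.normSq ((ρ y z *ᵥ u y z) j) : ℝ) : ℂ)) := by
          push_cast [hcdef]; ring
        rw [← hcc]
        have hcpos := hc y z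
        rw [← hcdef] at hcpos
        have : ((Real.sqrt c : ℂ))⁻¹ * ((Real.sqrt c : ℂ))⁻¹ * (c : ℂ)
            = (((Real.sqrt c * Real.sqrt c)⁻¹ * c : ℝ) : ℂ) := by push_cast; ring
        rw [this, Real.mul_self_sqrt hcpos.le, inv_mul_cancel₀ hcpos.ne']
        norm_num
      rw [hsum]
      simp
    · intro a b hadj
      simp only [Matrix.of_apply]
      have hdot : (∑ j, (starRingEnd ℂ) ((ρ a.1 a.2 *ᵥ u a.1 a.2) j)
          * ((ρ b.1 b.2 *ᵥ u b.1 b.2) j)) = 0 := by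
        have : (∑ j, (starRingEnd ℂ) ((ρ a.1 a.2 *ᵥ u a.1 a.2) j)
            * ((ρ b.1 b.2 *ᵥ u b.1 b.2) j))
            = star (ρ a.1 a.2 *ᵥ u a.1 a.2) ⬝ᵥ (ρ b.1 b.2 *ᵥ u b.1 b.2) := by
          simp [dotProduct, Complex.star_def]
        rw [this, Matrix.star_mulVec, (hstate a.1 a.2).1.1, Matrix.dotProduct_mulVec,
          Matrix.vecMul_vecMul, hzero a b hadj]
        simp
      have hsum0 : (∑ j, (starRingEnd ℂ)
            (((Real.sqrt (∑ j, Complex.normSq ((ρ a.1 a.2 *ᵥ u a.1 a.2) j)) : ℂ))⁻¹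
              * (ρ a.1 a.2 *ᵥ u a.1 a.2) j)
          * (((Real.sqrt (∑ j, Complex.normSq ((ρ b.1 b.2 *ᵥ u b.1 b.2) j)) : ℂ))⁻¹
              * (ρ b.1 b.2 *ᵥ u b.1 b.2) j)) = 0 := by
        have : ∀ j, (starRingEnd ℂ)
            (((Real.sqrt (∑ j, Complex.normSq ((ρ a.1 a.2 *ᵥ u a.1 a.2) j)) : ℂ))⁻¹
              * (ρ a.1 a.2 *ᵥ u a.1 a.2) j)
            * (((Real.sqrt (∑ j, Complex.normSq ((ρ b.1 b.2 *ᵥ u b.1 b.2) j)) : ℂ))⁻¹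
              * (ρ b.1 b.2 *ᵥ u b.1 b.2) j)
            = ((Real.sqrt (∑ j, Complex.normSq ((ρ a.1 a.2 *ᵥ u a.1 a.2) j)) : ℂ))⁻¹
              * ((Real.sqrt (∑ j, Complex.normSq ((ρ b.1 b.2 *ᵥ u b.1 b.2) j)) : ℂ))⁻¹
              * ((starRingEnd ℂ) ((ρ a.1 a.2 *ᵥ u a.1 a.2) j)
                * ((ρ b.1 b.2 *ᵥ u b.1 b.2) j)) := by
          intro j
          rw [_root_.map_mul, map_inv₀, Complex.conj_ofReal]
          ring
        rw [Finset.sum_congr rfl fun j _ => this j, ← Finset.mul_sum, hdot, mul_zero]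
      rw [hsum0]
      simp
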